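/- Let w and w̃ be finite words on {0,1} with ℓ(w) ≥ 2 and ℓ(w̃) ≥ 1, and let ê_w be the orthogonal projection of L²(μ) onto the span of e_w. Then ‖(K ê_w − ê_w K)(e_{w̃})‖² equals 1 if w̃ = w, equals 1/2 if w̃ = σ(w) (and w̃ ≠ w), and equals 0 if w̃ ≠ w and w̃ ≠ σ(w). Moreover ‖(L ê_w − ê_w L)(e_{w̃})‖² equals 1/2 if w̃ = w or if σ(w̃) = w (with w̃ ≠ w), and equals 0 if w̃ ≠ w and σ(w̃) ≠ w. Here σ(u) denotes the word u with its first letter removed. -/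

import Mathlib

open MeasureTheory ContinuousLinearMap
open scoped RealInnerProductSpace InnerProductSpace ENNReal

noncomputable section

/-- The shift space `Ω = {0,1}^ℕ`, with `false` playing the role of the symbol `0`
and `true` of the symbol `1`. -/
abbrev Ω : Type := ℕ → Bool

/-- The shift map `σ`, `σ(x)ₙ = x_{n+1}`. -/
def shiftMap : Ω → Ω := fun x n => x (n + 1)

/-- Prepending a symbol: `consSeq a x = ax`. -/
def consSeq (a : Bool) (x : Ω) : Ω := fun n => Nat.casesOn n a (fun k => x k)

/-- The cylinder set `[w]` of sequences beginning with the finite word `w`. -/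
def cylinder (w : List Bool) : Set Ω := {x | ∀ i : Fin w.length, x (i : ℕ) = w.get i}

/-- The Hilbert space `L²(μ)` (real). -/
abbrev E (μ : Measure Ω) := Lp (α := Ω) ℝ 2 μ

/-- The Hilbert space `H = L²(μ) × L²(μ)` with the norm `√(‖φ‖² + ‖ψ‖²)`. -/
abbrev HS (μ : Measure Ω) := WithLp 2 (E μ × E μ)

variable {μ : Measure Ω}

/-- The diagonal block operator `(φ, ψ) ↦ (A₁φ, A₂ψ)` on `H`. -/
def blockDiag (A₁ A₂ : E μ →L[ℝ] E μ) : HS μ →L[ℝ] HS μ :=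
  ((WithLp.prodContinuousLinearEquiv 2 ℝ (E μ) (E μ)).symm.toContinuousLinearMap).comp
    (((A₁.comp (ContinuousLinearMap.fst ℝ (E μ) (E μ))).prod
        (A₂.comp (ContinuousLinearMap.snd ℝ (E μ) (E μ)))).comp
      (WithLp.prodContinuousLinearEquiv 2 ℝ (E μ) (E μ)).toContinuousLinearMap)

/-- The antidiagonal block operator `(φ, ψ) ↦ (A₁ψ, A₂φ)` on `H`. -/
def blockAntidiag (A₁ A₂ : E μ →L[ℝ] E μ) : HS μ →L[ℝ] HS μ :=
  ((WithLp.prodContinuousLinearEquiv 2 ℝ (E μ) (E μ)).symm.toContinuousLinearMap).comp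
    (((A₁.comp (ContinuousLinearMap.snd ℝ (E μ) (E μ))).prod
        (A₂.comp (ContinuousLinearMap.fst ℝ (E μ) (E μ)))).comp
      (WithLp.prodContinuousLinearEquiv 2 ℝ (E μ) (E μ)).toContinuousLinearMap)

/-- The diagonal representation `π(A)(φ,ψ) = (Aφ, Aψ)`. -/
def diagRep (A : E μ →L[ℝ] E μ) : HS μ →L[ℝ] HS μ := blockDiag A A

/-- The Dirac operator `D(φ,ψ) = (Kψ, Lφ)` associated with the pair `(K, L)`. -/
def dirac (K L : E μ →L[ℝ] E μ) : HS μ →L[ℝ] HS μ := blockAntidiag K L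

/-- The commutator `[D, π(A)]`. -/
def commD (K L A : E μ →L[ℝ] E μ) : HS μ →L[ℝ] HS μ :=
  (dirac K L).comp (diagRep A) - (diagRep A).comp (dirac K L)

/-- The rank-one orthogonal projection onto the span of the unit vector `ψ`:
`φ ↦ ⟪ψ, φ⟫ • ψ`. -/
def rankOneProj (ψ : E μ) : E μ →L[ℝ] E μ := (innerSL ℝ ψ).smulRight ψ

/-- The Haar-basis element `e_w = 2^{ℓ(w)/2} (χ_{[w1]} - χ_{[w0]})`, as a function on `Ω`. -/
def haarFun (w : List Bool) : Ω → ℝ := fun x =>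
  (2 : ℝ) ^ ((w.length : ℝ) / 2) *
    ((cylinder (w ++ [true])).indicator 1 x - (cylinder (w ++ [false])).indicator 1 x)

lemma continuous_shiftMap : Continuous shiftMap :=
  continuous_pi fun n => continuous_apply (n + 1)

lemma continuous_consSeq (a : Bool) : Continuous (consSeq a) := by
  apply continuous_pi
  intro n
  cases n with
  | zero => exact continuous_const
  | succ k => exact continuous_apply k

/-- The Koopman operator on continuous functions: `f ↦ f ∘ σ`. -/
def koopmanC (f : C(Ω, ℝ)) : C(Ω, ℝ) := f.comp ⟨shiftMap, continuous_shiftMap⟩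

/-- The Ruelle operator on continuous functions: `(Lf)(x) = (f(0x) + f(1x))/2`. -/
def ruelleC (f : C(Ω, ℝ)) : C(Ω, ℝ) :=
  ⟨fun x => (f (consSeq false x) + f (consSeq true x)) / 2,
    ((f.continuous.comp (continuous_consSeq false)).add
      (f.continuous.comp (continuous_consSeq true))).div_const 2⟩

end

section Lemmas

local notation "Cyl" => (_root_.cylinder : List Bool → Set Ω)



lemma measurable_shiftMap : Measurable shiftMap :=
  measurable_pi_iff.2 fun n => measurable_pi_apply (n + 1)

lemma measurable_consSeq (a : Bool) : Measurable (consSeq a) := by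
  refine measurable_pi_iff.2 fun n => ?_
  cases n with
  | zero => exact measurable_const
  | succ k => exact measurable_pi_apply k

lemma measurableSet_cylinder (w : List Bool) : MeasurableSet (Cyl w) := by
  have : Cyl w = ⋂ i : Fin w.length, {x : Ω | x (i : ℕ) = w.get i} := by
    ext x; simp [_root_.cylinder, Set.mem_iInter]
  rw [this]
  refine MeasurableSet.iInter fun i => ?_
  have h : Measurable (fun x : Ω => x (i : ℕ)) := measurable_pi_apply (i : ℕ)
  exact h (measurableSet_singleton (w.get i))

lemma mem_cylinder_iff {w : List Bool} {x : Ω} :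
    x ∈ Cyl w ↔ ∀ i : Fin w.length, x (i : ℕ) = w.get i := Iff.rfl

lemma cylinder_nil : Cyl ([] : List Bool) = Set.univ := by
  ext x; simp [_root_.cylinder]

lemma prefix_of_mem_mem {s t : List Bool} {x : Ω} (hs : x ∈ Cyl s)
    (ht : x ∈ Cyl t) (hl : s.length ≤ t.length) : s <+: t := by
  rw [List.prefix_iff_eq_take]
  apply List.ext_get
  · simp [Nat.min_eq_left hl]
  · intro n h1 h2
    have hn : n < s.length := h1
    have hnt : n < t.length := lt_of_lt_of_le hn hl
    have e1 := hs ⟨n, hn⟩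
    have e2 := ht ⟨n, hnt⟩
    simp only [List.get_eq_getElem] at e1 e2 ⊢
    rw [List.getElem_take]
    rw [← e1, ← e2]

lemma cylinder_subset_of_prefix {s t : List Bool} (h : s <+: t) :
    Cyl t ⊆ Cyl s := by
  intro x hx i
  obtain ⟨r, rfl⟩ := h
  have := hx ⟨(i : ℕ), by simp; omega⟩
  simpa [List.get_eq_getElem, List.getElem_append, i.2] using this

lemma cylinder_inter_of_prefix {s t : List Bool} (h : s <+: t) :
    Cyl s ∩ Cyl t = Cyl t :=
  Set.inter_eq_self_of_subset_right (cylinder_subset_of_prefix h)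

lemma cylinder_inter_of_prefix' {s t : List Bool} (h : t <+: s) :
    Cyl s ∩ Cyl t = Cyl s :=
  Set.inter_eq_self_of_subset_left (cylinder_subset_of_prefix h)

lemma cylinder_inter_empty {s t : List Bool} (h1 : ¬ s <+: t) (h2 : ¬ t <+: s) :
    Cyl s ∩ Cyl t = ∅ := by
  ext x
  simp only [Set.mem_inter_iff, Set.mem_empty_iff_false, iff_false, not_and]
  intro hs ht
  rcases le_total s.length t.length with hl | hl
  · exact h1 (prefix_of_mem_mem hs ht hl)
  · exact h2 (prefix_of_mem_mem ht hs hl)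



lemma mem_cylinder_cons {a : Bool} {w : List Bool} {x : Ω} :
    x ∈ Cyl (a :: w) ↔ x 0 = a ∧ shiftMap x ∈ Cyl w := by
  constructor
  · intro h
    refine ⟨h ⟨0, by simp⟩, fun j => ?_⟩
    have := h ⟨(j : ℕ) + 1, by simp only [List.length_cons]; omega⟩
    simpa [shiftMap] using this
  · rintro ⟨h0, h1⟩ ⟨i, hi⟩
    cases i with
    | zero => simpa using h0
    | succ j =>
      have := h1 ⟨j, by simpa using hi⟩
      simpa [shiftMap] using this

lemma shift_preimage (w : List Bool) :
    shiftMap ⁻¹' (Cyl w) = Cyl (false :: w) ∪ Cyl (true :: w) := by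
  ext x
  simp only [Set.mem_preimage, Set.mem_union, mem_cylinder_cons]
  cases h : x 0 <;> tauto

lemma shiftMap_consSeq (a : Bool) (x : Ω) : shiftMap (consSeq a x) = x := rfl

lemma consSeq_preimage_cons (a b : Bool) (w : List Bool) :
    consSeq a ⁻¹' (Cyl (b :: w)) = if a = b then Cyl w else ∅ := by
  ext x
  simp only [Set.mem_preimage, mem_cylinder_cons, shiftMap_consSeq]
  have h0 : consSeq a x 0 = a := rfl
  by_cases hab : a = b
  · subst hab; simp [h0]
  · simp [h0, hab]

lemma cylinder_cons_disjoint (w : List Bool) :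
    Disjoint (Cyl (false :: w)) (Cyl (true :: w)) := by
  rw [Set.disjoint_iff_inter_eq_empty]
  ext x
  simp only [Set.mem_inter_iff, mem_cylinder_cons, Set.mem_empty_iff_false, iff_false, not_and]
  intro h; simp [h.1]

def cylSets : Set (Set Ω) := {S : Set Ω | ∃ w : List Bool, S = Cyl w}

lemma isPiSystem_cylSets : IsPiSystem cylSets := by
  rintro _ ⟨u, rfl⟩ _ ⟨v, rfl⟩ hne
  obtain ⟨x, hxu, hxv⟩ := hne
  rcases le_total u.length v.length with hl | hl
  · rw [cylinder_inter_of_prefix (prefix_of_mem_mem hxu hxv hl)]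
    exact ⟨v, rfl⟩
  · rw [cylinder_inter_of_prefix' (prefix_of_mem_mem hxv hxu hl)]
    exact ⟨u, rfl⟩

lemma generateFrom_cylSets :
    (inferInstance : MeasurableSpace Ω) = MeasurableSpace.generateFrom cylSets := by
  refine le_antisymm ?_ (MeasurableSpace.generateFrom_le ?_)
  swap
  · rintro _ ⟨w, rfl⟩; exact measurableSet_cylinder w
  · have key : ∀ (i : ℕ) (b : Bool),
        MeasurableSet[MeasurableSpace.generateFrom cylSets] {x : Ω | x i = b} := by
      intro i b
      have heq : {x : Ω | x i = b} = ⋃ f : Fin i → Bool, Cyl (List.ofFn f ++ [b]) := by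
        ext x
        simp only [Set.mem_setOf_eq, Set.mem_iUnion]
        constructor
        · intro hx
          refine ⟨fun j => x (j : ℕ), fun ⟨j, hj⟩ => ?_⟩
          simp only [List.length_append, List.length_ofFn, List.length_singleton] at hj
          rcases Nat.lt_or_ge j i with hji | hji
          · simp [List.get_eq_getElem, List.getElem_append_left, List.length_ofFn, hji,
              List.getElem_ofFn]
          · have hj' : j = i := by omega
            subst hj'
            simp [List.get_eq_getElem, List.getElem_append_right, List.length_ofFn, hx]
        · rintro ⟨f, hf⟩
          have := hf ⟨i, by simp⟩
          simpa [List.get_eq_getElem, List.getElem_append_right, List.length_ofFn] using this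
      rw [heq]
      exact MeasurableSet.iUnion fun f =>
        MeasurableSpace.measurableSet_generateFrom ⟨List.ofFn f ++ [b], rfl⟩
    refine iSup_le fun i => ?_
    rw [← measurable_iff_comap_le]
    exact @measurable_to_countable Bool Ω _ _ (MeasurableSpace.generateFrom cylSets)
      (fun x : Ω => x i) (fun y => key i (y i))

variable {μ : Measure Ω} [IsProbabilityMeasure μ]

lemma map_shiftMap_eq (hμ : ∀ w : List Bool, μ (Cyl w) = (1 / 2) ^ w.length) :
    μ.map shiftMap = μ := by
  haveI : IsProbabilityMeasure (μ.map shiftMap) :=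
    Measure.isProbabilityMeasure_map measurable_shiftMap.aemeasurable
  refine ext_of_generate_finite cylSets generateFrom_cylSets isPiSystem_cylSets ?_ (by simp)
  rintro _ ⟨w, rfl⟩
  rw [Measure.map_apply measurable_shiftMap (measurableSet_cylinder w), shift_preimage,
    measure_union (cylinder_cons_disjoint w) (measurableSet_cylinder _), hμ, hμ, hμ]
  simp only [List.length_cons, pow_succ]
  rw [← mul_add, ENNReal.add_halves, mul_one]

lemma map_consSeq_add (hμ : ∀ w : List Bool, μ (Cyl w) = (1 / 2) ^ w.length) :
    μ.map (consSeq false) + μ.map (consSeq true) = (2 : ℝ≥0∞) • μ := by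
  haveI : IsProbabilityMeasure (μ.map (consSeq false)) :=
    Measure.isProbabilityMeasure_map (measurable_consSeq false).aemeasurable
  haveI : IsProbabilityMeasure (μ.map (consSeq true)) :=
    Measure.isProbabilityMeasure_map (measurable_consSeq true).aemeasurable
  refine ext_of_generate_finite cylSets generateFrom_cylSets isPiSystem_cylSets ?_ ?_
  · rintro _ ⟨w, rfl⟩
    rw [Measure.add_apply, Measure.map_apply (measurable_consSeq false) (measurableSet_cylinder w),
      Measure.map_apply (measurable_consSeq true) (measurableSet_cylinder w),
      Measure.smul_apply, smul_eq_mul, hμ]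
    have h21 : (2 : ℝ≥0∞) * (1 / 2) = 1 := by
      rw [one_div, ENNReal.mul_inv_cancel (by norm_num) (by norm_num)]
    cases w with
    | nil =>
      simp only [cylinder_nil, List.length_nil, pow_zero, mul_one, Set.preimage_univ,
        measure_univ]
      exact one_add_one_eq_two
    | cons b t =>
      rw [consSeq_preimage_cons, consSeq_preimage_cons]
      have : (2 : ℝ≥0∞) * (1 / 2) ^ (b :: t).length = (1 / 2) ^ t.length := by
        rw [List.length_cons, pow_succ, ← mul_assoc, mul_comm (2 : ℝ≥0∞), mul_assoc, h21, mul_one]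
      rw [this]
      cases b <;> simp [hμ]
  · rw [Measure.add_apply, Measure.smul_apply, smul_eq_mul,
      measure_univ, measure_univ, measure_univ, mul_one]
    exact one_add_one_eq_two

lemma qmp_shiftMap (hμ : ∀ w : List Bool, μ (Cyl w) = (1 / 2) ^ w.length) :
    Measure.QuasiMeasurePreserving shiftMap μ μ := by
  refine ⟨measurable_shiftMap, ?_⟩
  rw [map_shiftMap_eq hμ]

lemma qmp_consSeq (hμ : ∀ w : List Bool, μ (Cyl w) = (1 / 2) ^ w.length) (a : Bool) :
    Measure.QuasiMeasurePreserving (consSeq a) μ μ := by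
  refine ⟨measurable_consSeq a, Measure.AbsolutelyContinuous.mk fun s hs h0 => ?_⟩
  have h1 : (μ.map (consSeq a)) s ≤ (μ.map (consSeq false) + μ.map (consSeq true)) s := by
    cases a
    · exact le_add_right le_rfl
    · exact le_add_left le_rfl
  rw [map_consSeq_add hμ, Measure.smul_apply, smul_eq_mul, h0, mul_zero] at h1
  exact le_antisymm h1 zero_le
lemma c_pos (l : ℕ) : (0:ℝ) < (2:ℝ) ^ ((l : ℝ) / 2) := Real.rpow_pos_of_pos (by norm_num) _

lemma c_succ (l : ℕ) :
    (2:ℝ) ^ (((l : ℕ) + 1 : ℝ) / 2) = Real.sqrt 2 * (2:ℝ) ^ ((l : ℝ) / 2) := by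
  rw [Real.sqrt_eq_rpow, ← Real.rpow_add (by norm_num)]
  congr 1
  ring

lemma sqrt2_pos : (0:ℝ) < Real.sqrt 2 := Real.sqrt_pos.2 (by norm_num)

lemma sqrt2_sq : Real.sqrt 2 * Real.sqrt 2 = 2 := Real.mul_self_sqrt (by norm_num)

lemma indicator_cons (a : Bool) (u : List Bool) (x : Ω) :
    (Cyl (a :: u)).indicator (1 : Ω → ℝ) x =
      (if x 0 = a then 1 else 0) * (Cyl u).indicator (1 : Ω → ℝ) (shiftMap x) := by
  by_cases h0 : x 0 = a <;> by_cases h1 : shiftMap x ∈ Cyl u <;>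
    simp [Set.indicator_apply, mem_cylinder_cons, h0, h1, shiftMap]

lemma haar_shift (v : List Bool) (x : Ω) :
    haarFun v (shiftMap x) =
      (Real.sqrt 2)⁻¹ * (haarFun (false :: v) x + haarFun (true :: v) x) := by
  unfold haarFun
  simp only [List.cons_append, indicator_cons, List.length_cons]
  push_cast
  rw [c_succ]
  cases h : x 0 <;>
    · simp only [h, if_true, if_false, Bool.false_eq_true, Bool.true_eq_false, one_mul, zero_mul,
        reduceIte]
      field_simp
      ring

lemma indicator_consSeq (a b : Bool) (u : List Bool) (x : Ω) :
    (Cyl (b :: u)).indicator (1 : Ω → ℝ) (consSeq a x) =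
      if a = b then (Cyl u).indicator (1 : Ω → ℝ) x else 0 := by
  have h0 : consSeq a x 0 = a := rfl
  by_cases hab : a = b
  · subst hab
    by_cases h1 : x ∈ Cyl u <;>
      simp [Set.indicator_apply, mem_cylinder_cons, shiftMap_consSeq, h0, h1]
  · simp [Set.indicator_apply, mem_cylinder_cons, shiftMap_consSeq, h0, hab]

lemma haar_cons (b : Bool) (t : List Bool) (x : Ω) :
    (haarFun (b :: t) (consSeq false x) + haarFun (b :: t) (consSeq true x)) / 2 =
      (Real.sqrt 2)⁻¹ * haarFun t x := by
  unfold haarFun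
  simp only [List.cons_append, indicator_consSeq, List.length_cons]
  push_cast
  rw [c_succ]
  have h2 : Real.sqrt 2 * Real.sqrt 2 = 2 := sqrt2_sq
  have hne : Real.sqrt 2 ≠ 0 := ne_of_gt sqrt2_pos
  cases b <;>
    · simp only [if_true, if_false, Bool.false_eq_true, Bool.true_eq_false, reduceIte]
      field_simp
      linear_combination
        ((Cyl (t ++ [true])).indicator (1:Ω→ℝ) x - (Cyl (t ++ [false])).indicator (1:Ω→ℝ) x) *
          h2

section LpLemmas

variable {μ : Measure Ω} [IsProbabilityMeasure μ]

lemma K_e (hμ : ∀ w : List Bool, μ (Cyl w) = (1 / 2) ^ w.length)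
    {K : E μ →L[ℝ] E μ}
    (hK : ∀ g : E μ, (K g : Ω → ℝ) =ᵐ[μ] fun x => g (shiftMap x))
    {e : List Bool → E μ} (he : ∀ w : List Bool, (e w : Ω → ℝ) =ᵐ[μ] haarFun w)
    (v : List Bool) :
    K (e v) = (Real.sqrt 2)⁻¹ • (e (false :: v) + e (true :: v)) := by
  refine Lp.ext ?_
  have h1 : (fun x => (e v : Ω → ℝ) (shiftMap x)) =ᵐ[μ] fun x => haarFun v (shiftMap x) :=
    (qmp_shiftMap hμ).ae_eq_comp (he v)
  have h2 : (fun x => haarFun v (shiftMap x)) =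
      fun x => (Real.sqrt 2)⁻¹ * (haarFun (false :: v) x + haarFun (true :: v) x) :=
    funext fun x => haar_shift v x
  have h3 : ((((Real.sqrt 2)⁻¹ : ℝ) • (e (false :: v) + e (true :: v)) : E μ) : Ω → ℝ) =ᵐ[μ]
      fun x => (Real.sqrt 2)⁻¹ * (haarFun (false :: v) x + haarFun (true :: v) x) := by
    filter_upwards [Lp.coeFn_smul ((Real.sqrt 2)⁻¹ : ℝ) (e (false :: v) + e (true :: v)),
      Lp.coeFn_add (e (false :: v)) (e (true :: v)), he (false :: v), he (true :: v)]
      with x hx1 hx2 hx3 hx4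
    simp only [hx1, Pi.smul_apply, hx2, Pi.add_apply, hx3, hx4, smul_eq_mul]
  exact ((hK (e v)).trans (h1.trans (h2 ▸ Filter.EventuallyEq.refl _ _))).trans h3.symm

lemma L_e (hμ : ∀ w : List Bool, μ (Cyl w) = (1 / 2) ^ w.length)
    {L : E μ →L[ℝ] E μ}
    (hL : ∀ g : E μ, (L g : Ω → ℝ) =ᵐ[μ]
      fun x => (g (consSeq false x) + g (consSeq true x)) / 2)
    {e : List Bool → E μ} (he : ∀ w : List Bool, (e w : Ω → ℝ) =ᵐ[μ] haarFun w)
    (b : Bool) (t : List Bool) :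
    L (e (b :: t)) = (Real.sqrt 2)⁻¹ • e t := by
  refine Lp.ext ?_
  have hq0 : (fun x => (e (b :: t) : Ω → ℝ) (consSeq false x)) =ᵐ[μ]
      fun x => haarFun (b :: t) (consSeq false x) := (qmp_consSeq hμ false).ae_eq_comp (he _)
  have hq1 : (fun x => (e (b :: t) : Ω → ℝ) (consSeq true x)) =ᵐ[μ]
      fun x => haarFun (b :: t) (consSeq true x) := (qmp_consSeq hμ true).ae_eq_comp (he _)
  have h3 : ((((Real.sqrt 2)⁻¹ : ℝ) • e t : E μ) : Ω → ℝ) =ᵐ[μ]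
      fun x => (Real.sqrt 2)⁻¹ * haarFun t x := by
    filter_upwards [Lp.coeFn_smul ((Real.sqrt 2)⁻¹ : ℝ) (e t), he t] with x hx1 hx2
    simp only [hx1, Pi.smul_apply, hx2, smul_eq_mul]
  refine ((hL (e (b :: t))).trans ?_).trans h3.symm
  filter_upwards [hq0, hq1] with x h0 h1
  simp only [h0, h1]
  exact haar_cons b t x

end LpLemmas

section InnerLemmas

variable {μ : Measure Ω} [IsProbabilityMeasure μ]

lemma ind_inter (s t : Set Ω) (x : Ω) :
    (s ∩ t).indicator (1 : Ω → ℝ) x = s.indicator 1 x * t.indicator 1 x := by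
  by_cases h1 : x ∈ s <;> by_cases h2 : x ∈ t <;> simp [Set.indicator_apply, h1, h2]

lemma integrable_ind (S : Set Ω) (hS : MeasurableSet S) :
    Integrable (S.indicator (1 : Ω → ℝ)) μ :=
  (integrable_indicator_iff hS).2 (integrableOn_const (measure_ne_top μ S))

lemma integral_haar (u v : List Bool) :
    ∫ x, haarFun u x * haarFun v x ∂μ =
      (2:ℝ) ^ ((u.length : ℝ) / 2) * (2:ℝ) ^ ((v.length : ℝ) / 2) *
        ((μ (Cyl (u ++ [true]) ∩ Cyl (v ++ [true]))).toReal
          - (μ (Cyl (u ++ [true]) ∩ Cyl (v ++ [false]))).toReal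
          - (μ (Cyl (u ++ [false]) ∩ Cyl (v ++ [true]))).toReal
          + (μ (Cyl (u ++ [false]) ∩ Cyl (v ++ [false]))).toReal) := by
  have hfun : (fun x => haarFun u x * haarFun v x) =
      fun x => (2:ℝ) ^ ((u.length : ℝ) / 2) * (2:ℝ) ^ ((v.length : ℝ) / 2) *
        ((Cyl (u ++ [true]) ∩ Cyl (v ++ [true])).indicator 1 x
          - (Cyl (u ++ [true]) ∩ Cyl (v ++ [false])).indicator 1 x
          - (Cyl (u ++ [false]) ∩ Cyl (v ++ [true])).indicator 1 x
          + (Cyl (u ++ [false]) ∩ Cyl (v ++ [false])).indicator 1 x) := by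
    funext x
    simp only [ind_inter, haarFun]
    ring
  rw [hfun]
  have i : ∀ s t : List Bool, Integrable ((Cyl s ∩ Cyl t).indicator (1 : Ω → ℝ)) μ :=
    fun s t => integrable_ind _ ((measurableSet_cylinder s).inter (measurableSet_cylinder t))
  have h1 : Integrable (fun a =>
      (Cyl (u ++ [true]) ∩ Cyl (v ++ [true])).indicator (1 : Ω → ℝ) a
        - (Cyl (u ++ [true]) ∩ Cyl (v ++ [false])).indicator 1 a
        - (Cyl (u ++ [false]) ∩ Cyl (v ++ [true])).indicator 1 a) μ :=
    ((i _ _).sub (i _ _)).sub (i _ _)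
  have h2 : Integrable (fun a =>
      (Cyl (u ++ [true]) ∩ Cyl (v ++ [true])).indicator (1 : Ω → ℝ) a
        - (Cyl (u ++ [true]) ∩ Cyl (v ++ [false])).indicator 1 a) μ :=
    (i _ _).sub (i _ _)
  rw [MeasureTheory.integral_const_mul, integral_add h1 (i _ _),
    integral_sub h2 (i _ _), integral_sub (i _ _) (i _ _),
    integral_indicator_one ((measurableSet_cylinder _).inter (measurableSet_cylinder _)),
    integral_indicator_one ((measurableSet_cylinder _).inter (measurableSet_cylinder _)),
    integral_indicator_one ((measurableSet_cylinder _).inter (measurableSet_cylinder _)),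
    integral_indicator_one ((measurableSet_cylinder _).inter (measurableSet_cylinder _))]
  rfl

lemma measure_inter_toReal (hμ : ∀ w : List Bool, μ (Cyl w) = (1 / 2) ^ w.length)
    (s t : List Bool) :
    (μ (Cyl s ∩ Cyl t)).toReal =
      if s <+: t then (1/2 : ℝ) ^ t.length else
        if t <+: s then (1/2 : ℝ) ^ s.length else 0 := by
  by_cases h1 : s <+: t
  · rw [cylinder_inter_of_prefix h1, hμ, if_pos h1]
    simp [ENNReal.toReal_pow]
  · by_cases h2 : t <+: s
    · rw [cylinder_inter_of_prefix' h2, hμ, if_neg h1, if_pos h2]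
      simp [ENNReal.toReal_pow]
    · rw [cylinder_inter_empty h1 h2, if_neg h1, if_neg h2]
      simp

lemma not_prefix_append_ne {u : List Bool} {c d : Bool} (h : c ≠ d) :
    ¬ (u ++ [c] <+: u ++ [d]) := by
  intro hp
  have := hp.eq_of_length (by simp)
  exact h (by simpa using this)

lemma inner_eq_integral_haar {e : List Bool → E μ}
    (he : ∀ w : List Bool, (e w : Ω → ℝ) =ᵐ[μ] haarFun w) (u v : List Bool) :
    ⟪e u, e v⟫_ℝ = ∫ x, haarFun u x * haarFun v x ∂μ := by
  rw [L2.inner_def]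
  refine integral_congr_ae ?_
  filter_upwards [he u, he v] with x h1 h2
  simp [h1, h2, RCLike.inner_apply, mul_comm]

lemma inner_e_ne_aux (hμ : ∀ w : List Bool, μ (Cyl w) = (1 / 2) ^ w.length)
    {e : List Bool → E μ}
    (he : ∀ w : List Bool, (e w : Ω → ℝ) =ᵐ[μ] haarFun w) {u v : List Bool}
    (hl : u.length ≤ v.length) (hne : u ≠ v) : ⟪e u, e v⟫_ℝ = 0 := by
  rw [inner_eq_integral_haar he, integral_haar,
    measure_inter_toReal hμ, measure_inter_toReal hμ, measure_inter_toReal hμ,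
    measure_inter_toReal hμ]
  have hvu : ∀ c d : Bool, ¬ (v ++ [d] <+: u ++ [c]) := by
    intro c d h
    have hlen := h.length_le
    simp only [List.length_append, List.length_singleton] at hlen
    have hlv : v.length = u.length := le_antisymm (by omega) hl
    have heq := h.eq_of_length (by simp [hlv])
    exact hne ((List.append_inj heq hlv).1).symm
  have hp : ∀ c d : Bool, (u ++ [c] <+: v ++ [d]) ↔ (u ++ [c] <+: v) := by
    intro c d
    rw [List.prefix_concat_iff]
    constructor
    · rintro (heq | h)
      · exfalso
        have hlv : u.length = v.length := by
          have := congrArg List.length heq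
          simp only [List.length_append, List.length_singleton] at this
          omega
        exact hne (List.append_inj heq hlv).1
      · exact h
    · exact Or.inr
  simp only [hp, hvu, if_false]
  by_cases h1 : u ++ [true] <+: v <;> by_cases h0 : u ++ [false] <+: v <;>
    simp [h1, h0, List.length_append] <;> ring

lemma inner_e (hμ : ∀ w : List Bool, μ (Cyl w) = (1 / 2) ^ w.length)
    {e : List Bool → E μ}
    (he : ∀ w : List Bool, (e w : Ω → ℝ) =ᵐ[μ] haarFun w) (u v : List Bool) :
    ⟪e u, e v⟫_ℝ = if u = v then 1 else 0 := by
  by_cases huv : u = v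
  · subst huv
    rw [if_pos rfl, inner_eq_integral_haar he, integral_haar,
      measure_inter_toReal hμ, measure_inter_toReal hμ, measure_inter_toReal hμ,
      measure_inter_toReal hμ]
    rw [if_pos List.prefix_rfl, if_pos List.prefix_rfl,
      if_neg (not_prefix_append_ne (by simp)), if_neg (not_prefix_append_ne (by simp)),
      if_neg (not_prefix_append_ne (by simp)), if_neg (not_prefix_append_ne (by simp))]
    have hc : (2:ℝ) ^ ((u.length : ℝ) / 2) * (2:ℝ) ^ ((u.length : ℝ) / 2)
        = (2:ℝ) ^ (u.length : ℕ) := by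
      rw [← Real.rpow_add (by norm_num), ← Real.rpow_natCast 2 u.length]
      congr 1
      ring
    rw [hc]
    have key : ((2:ℝ) * (1/2)) ^ u.length = 1 := by norm_num
    rw [mul_pow] at key
    simp only [List.length_append, List.length_singleton]
    linear_combination key
  · rw [if_neg huv]
    rcases le_total u.length v.length with hl | hl
    · exact inner_e_ne_aux hμ he hl huv
    · rw [real_inner_comm]
      exact inner_e_ne_aux hμ he hl (Ne.symm huv)

end InnerLemmas

end Lemmas
/-- The values of `‖(K ê_w − ê_w K)(e_w̃)‖²` and `‖(L ê_w − ê_w L)(e_w̃)‖²`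
according to the relative position of the words `w` (with `ℓ(w) ≥ 2`) and
`w̃` (with `ℓ(w̃) ≥ 1`). -/
theorem stmt6
    (μ : Measure Ω) [IsProbabilityMeasure μ]
    (hμ : ∀ w : List Bool, μ (cylinder w) = (1 / 2) ^ w.length)
    (K L : E μ →L[ℝ] E μ)
    (hK : ∀ g : E μ, (K g : Ω → ℝ) =ᵐ[μ] fun x => g (shiftMap x))
    (hL : ∀ g : E μ, (L g : Ω → ℝ) =ᵐ[μ]
      fun x => (g (consSeq false x) + g (consSeq true x)) / 2)
    (hadj : ContinuousLinearMap.adjoint K = L)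
    (e : List Bool → E μ) (he : ∀ w : List Bool, (e w : Ω → ℝ) =ᵐ[μ] haarFun w)
    (w w' : List Bool) (hw : 2 ≤ w.length) (hw' : 1 ≤ w'.length) :
    ((w' = w → ‖(K (rankOneProj (e w) (e w')) - rankOneProj (e w) (K (e w')))‖ ^ 2 = 1) ∧
     (w' = w.tail → w' ≠ w →
        ‖(K (rankOneProj (e w) (e w')) - rankOneProj (e w) (K (e w')))‖ ^ 2 = 1 / 2) ∧
     (w' ≠ w → w' ≠ w.tail →
        ‖(K (rankOneProj (e w) (e w')) - rankOneProj (e w) (K (e w')))‖ ^ 2 = 0)) ∧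
    ((w' = w ∨ (w'.tail = w ∧ w' ≠ w) →
        ‖(L (rankOneProj (e w) (e w')) - rankOneProj (e w) (L (e w')))‖ ^ 2 = 1 / 2) ∧
     (w' ≠ w → w'.tail ≠ w →
        ‖(L (rankOneProj (e w) (e w')) - rankOneProj (e w) (L (e w')))‖ ^ 2 = 0)) := by

  have hIn := inner_e hμ he
  have hKe := fun v => K_e hμ hK he v
  have hLe := fun (a : Bool) (u : List Bool) => L_e hμ hL he a u
  have hproj : ∀ g : E μ, rankOneProj (e w) g = ⟪e w, g⟫_ℝ • e w := fun g => rfl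
  have hlen_ne : ∀ (a : Bool) (u : List Bool), u ≠ a :: u := fun a u h => by
    simpa using congrArg List.length h
  have hnorm_sq : ∀ u, ‖e u‖ ^ 2 = 1 := fun u => by
    rw [← real_inner_self_eq_norm_sq, hIn]; simp
  have hsq : ((Real.sqrt 2)⁻¹ : ℝ) ^ 2 = 1 / 2 := by
    rw [inv_pow, Real.sq_sqrt (by norm_num : (0:ℝ) ≤ 2)]
    norm_num
  have hsmul_sq : ∀ (c : ℝ) (x : E μ), ‖c • x‖ ^ 2 = c ^ 2 * ‖x‖ ^ 2 := fun c x => by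
    rw [norm_smul, mul_pow, Real.norm_eq_abs, sq_abs]
  obtain ⟨b, t, rfl⟩ : ∃ b t, w = b :: t := by
    cases w with
    | nil => simp at hw
    | cons b t => exact ⟨b, t, rfl⟩
  have hinKw : ∀ v, ⟪e (b :: t), K (e v)⟫_ℝ =
      (Real.sqrt 2)⁻¹ * ((if (b :: t) = false :: v then (1:ℝ) else 0) +
        (if (b :: t) = true :: v then (1:ℝ) else 0)) := fun v => by
    rw [hKe v, real_inner_smul_right, inner_add_right, hIn, hIn]
  simp only [List.tail_cons]
  refine ⟨⟨?_, ?_, ?_⟩, ?_, ?_⟩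
  · -- K, w' = w
    intro h; subst h
    rw [hproj, hproj, hIn, if_pos rfl, one_smul]
    have hz : ⟪e (b :: t), K (e (b :: t))⟫_ℝ = 0 := by
      rw [hinKw]
      rw [if_neg (hlen_ne false (b :: t)), if_neg (hlen_ne true (b :: t))]
      ring
    rw [hz, zero_smul, sub_zero, hKe, hsmul_sq, hsq, norm_add_sq_real, hnorm_sq, hnorm_sq,
      hIn, if_neg (by simp)]
    norm_num
  · -- K, w' = tail w, w' ≠ w
    intro h hne; subst h
    rw [hproj, hproj, hIn, if_neg (fun hh => hne hh.symm), zero_smul, map_zero, zero_sub,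
      norm_neg]
    have hc : ⟪e (b :: w'), K (e w')⟫_ℝ = (Real.sqrt 2)⁻¹ := by
      rw [hinKw]; cases b <;> simp
    rw [hc, hsmul_sq, hsq, hnorm_sq]
    norm_num
  · -- K, zero case
    intro h1 h2
    rw [hproj, hproj, hIn, if_neg (fun hh => h1 hh.symm), zero_smul, map_zero, zero_sub, norm_neg]
    have hc : ⟪e (b :: t), K (e w')⟫_ℝ = 0 := by
      rw [hinKw]
      rw [if_neg (fun hh => h2 (by injection hh with _ h3; exact h3.symm)),
        if_neg (fun hh => h2 (by injection hh with _ h3; exact h3.symm))]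
      ring
    rw [hc, zero_smul, norm_zero]
    norm_num
  · -- L, 1/2 cases
    intro h
    rcases h with h | ⟨h1, h2⟩
    · subst h
      rw [hproj, hproj, hIn, if_pos rfl, one_smul]
      have hz : ⟪e (b :: t), L (e (b :: t))⟫_ℝ = 0 := by
        rw [hLe b t, real_inner_smul_right, hIn,
          if_neg (fun hh => hlen_ne b t hh.symm), mul_zero]
      rw [hz, zero_smul, sub_zero, hLe, hsmul_sq, hsq, hnorm_sq]
      norm_num
    · cases w' with
      | nil => simp at hw'
      | cons b' t' =>
        simp only [List.tail_cons] at h1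
        subst h1
        rw [hproj, hproj, hIn, if_neg (hlen_ne b' (b :: t)), zero_smul, map_zero, zero_sub,
          norm_neg, hLe b' (b :: t), real_inner_smul_right, hIn, if_pos rfl, mul_one,
          hsmul_sq, hsq, hnorm_sq]
        norm_num
  · -- L, zero case
    intro h1 h2
    cases w' with
    | nil => simp at hw'
    | cons b' t' =>
      simp only [List.tail_cons] at h2
      rw [hproj, hproj, hIn, if_neg (fun hh => h1 hh.symm), zero_smul, map_zero, zero_sub,
        norm_neg, hLe b' t', real_inner_smul_right, hIn, if_neg (fun hh => h2 hh.symm), mul_zero,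
        zero_smul, norm_zero]
      norm_num
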